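/- With q(λ) = Σ_{i=m}^{n} (−1)^{n−i} (s_{n−i}/s_{n−m}) λ^{i} and g_m > 0, every nonzero complex root ν of q satisfies |ν| ≥ 1/(2g_m); in particular 0 is the only root of q in the open ball B(0, 1/(2g_m)). -/

import Mathlib

open Finset

/-- The `k`-th elementary symmetric function of the values `σ i`, `i : Fin n`
(with the convention `esym σ 0 = 1`). -/
noncomputable def esym {n : ℕ} (σ : Fin n → ℝ) (k : ℕ) : ℝ :=
  ∑ t ∈ Finset.univ.powersetCard k, ∏ i ∈ t, σ i

/-- `g_m = max_{m+1 ≤ i ≤ n} (s_{n-i}/s_{n-m})^{1/(i-m)}`, with the convention `g_n = 1`. -/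
noncomputable def gQ (n : ℕ) (σ : Fin n → ℝ) (m : ℕ) : ℝ :=
  if m = n then 1 else
    sSup ((fun i : ℕ => (esym σ (n - i) / esym σ (n - m)) ^ ((1 : ℝ) / ((i : ℝ) - (m : ℝ)))) ''
      (Set.Icc (m + 1) n))

/-- The polynomial `q(λ) = Σ_{i=m}^{n} (−1)^{n−i} (s_{n−i}/s_{n−m}) λ^{i}`. -/
noncomputable def qPoly (n : ℕ) (σ : Fin n → ℝ) (m : ℕ) (lam : ℂ) : ℂ :=
  ∑ i ∈ Finset.Icc m n,
    (-1 : ℂ) ^ (n - i) * ((esym σ (n - i) / esym σ (n - m) : ℝ) : ℂ) * lam ^ i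

lemma esym_nonneg {n : ℕ} (σ : Fin n → ℝ) (hσ : ∀ i, 0 ≤ σ i) (k : ℕ) :
    0 ≤ esym σ k := by
  apply Finset.sum_nonneg
  intro t _
  exact Finset.prod_nonneg fun i _ => hσ i

lemma geom_half_sum (a : ℕ) : ∀ b, a ≤ b →
    ∑ i ∈ Finset.Icc (a+1) b, (1/2:ℝ)^(i-a) = 1 - (1/2:ℝ)^(b-a) := by
  intro b
  induction b with
  | zero => intro h; interval_cases a; simp
  | succ b ih =>
    intro h
    rcases Nat.lt_or_ge a (b+1) with h' | h'
    · have hab : a ≤ b := by omega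
      rw [Finset.sum_Icc_succ_top (by omega : a + 1 ≤ b + 1), ih hab]
      have h1 : b + 1 - a = (b - a) + 1 := by omega
      rw [h1, pow_succ]
      ring
    · have : a = b + 1 := by omega
      subst this
      simp

/-- With `q(λ) = Σ_{i=m}^{n} (−1)^{n−i} (s_{n−i}/s_{n−m}) λ^{i}` and
`g_m > 0`, every nonzero complex root `ν` of `q` satisfies `|ν| ≥ 1/(2 g_m)`; in particular
`0` is the only root of `q` in the open ball `B(0, 1/(2 g_m))`. -/
theorem stmt2 {s n : ℕ} (hn : 1 ≤ n) (hsn : n ≤ s)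
    (M : Matrix (Fin s) (Fin n) ℂ) (σ : Fin n → ℝ)
    (hσnonneg : ∀ i, 0 ≤ σ i)
    (hσanti : ∀ i j : Fin n, i ≤ j → σ j ≤ σ i)
    -- `σ` is the family of singular values of `M`:
    (e : Fin n ≃ Fin n)
    (hσsv : ∀ i, σ i =
      Real.sqrt ((Matrix.isHermitian_conjTranspose_mul_self M).eigenvalues (e i)))
    (r : ℕ) (hrank : M.rank = r)
    (m : ℕ) (hm₁ : n - r ≤ m) (hm₂ : m ≤ n)
    (hg : 0 < gQ n σ m) :
    (∀ ν : ℂ, ν ≠ 0 → qPoly n σ m ν = 0 → 1 / (2 * gQ n σ m) ≤ ‖ν‖) ∧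
    (∀ ν ∈ Metric.ball (0 : ℂ) (1 / (2 * gQ n σ m)), qPoly n σ m ν = 0 → ν = 0) := by
  have key : ∀ ν : ℂ, ν ≠ 0 → qPoly n σ m ν = 0 →
      1 / (2 * gQ n σ m) ≤ ‖ν‖ := by
    intro ν hν hq
    by_contra hlt
    push_neg at hlt
    by_cases hmn : m = n
    · -- g = 1, q(ν) = ν^n
      subst hmn
      have h0 : esym σ 0 = 1 := by simp [esym]
      simp only [qPoly, Finset.Icc_self, Finset.sum_singleton, Nat.sub_self, pow_zero,
        h0, div_self (one_ne_zero (α := ℝ))] at hq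
      simp only [one_mul, Complex.ofReal_one, mul_one] at hq
      exact hν (pow_eq_zero_iff (by omega) |>.mp hq)
    · have hmlt : m < n := lt_of_le_of_ne hm₂ hmn
      set g := gQ n σ m with hgdef
      have hgS : g = sSup ((fun i : ℕ =>
          (esym σ (n - i) / esym σ (n - m)) ^ ((1 : ℝ) / ((i : ℝ) - (m : ℝ)))) ''
          (Set.Icc (m + 1) n)) := by
        rw [hgdef, gQ, if_neg hmn]
      -- s_{n-m} > 0
      have hsnm : 0 < esym σ (n - m) := by
        rcases lt_or_eq_of_le (esym_nonneg σ hσnonneg (n - m)) with h | h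
        · exact h
        · exfalso
          have hzero : ∀ x ∈ ((fun i : ℕ =>
              (esym σ (n - i) / esym σ (n - m)) ^ ((1 : ℝ) / ((i : ℝ) - (m : ℝ)))) ''
              (Set.Icc (m + 1) n)), x ≤ 0 := by
            rintro x ⟨i, hi, rfl⟩
            dsimp only
            have h1 : (0:ℝ) < (i:ℝ) - (m:ℝ) := by
              have : (m:ℝ) + 1 ≤ (i:ℝ) := by exact_mod_cast hi.1
              linarith
            rw [← h, div_zero, Real.zero_rpow (ne_of_gt (by positivity))]
          have hne : ((fun i : ℕ =>
              (esym σ (n - i) / esym σ (n - m)) ^ ((1 : ℝ) / ((i : ℝ) - (m : ℝ)))) ''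
              (Set.Icc (m + 1) n)).Nonempty :=
            ⟨_, Set.mem_image_of_mem _ (Set.mem_Icc.mpr ⟨le_refl _, hmlt⟩)⟩
          have := csSup_le hne hzero
          rw [← hgS] at this
          linarith
      -- coefficient bound
      have hcoef : ∀ i ∈ Finset.Icc (m+1) n,
          esym σ (n - i) / esym σ (n - m) ≤ g ^ (i - m) := by
        intro i hi
        rw [Finset.mem_Icc] at hi
        set x := esym σ (n - i) / esym σ (n - m) with hxdef
        have hx : 0 ≤ x := div_nonneg (esym_nonneg σ hσnonneg _) hsnm.le
        have hle : x ^ ((1 : ℝ) / ((i : ℝ) - (m : ℝ))) ≤ g := by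
          rw [hgS]
          apply le_csSup
          · exact ((Set.finite_Icc (m+1) n).image _).bddAbove
          · exact Set.mem_image_of_mem _ (Set.mem_Icc.mpr ⟨hi.1, hi.2⟩)
        have hd : ((i - m : ℕ) : ℝ) = (i : ℝ) - (m : ℝ) := by
          have : m ≤ i := by omega
          push_cast [this]; ring
        have hdpos : (0:ℝ) < (i:ℝ) - (m:ℝ) := by
          have : (m:ℝ) + 1 ≤ (i:ℝ) := by exact_mod_cast hi.1
          linarith
        have hxeq : x = (x ^ ((1 : ℝ) / ((i : ℝ) - (m : ℝ)))) ^ (i - m) := by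
          rw [← Real.rpow_natCast (x ^ ((1 : ℝ) / ((i : ℝ) - (m : ℝ)))) (i - m),
            ← Real.rpow_mul hx, hd, one_div, inv_mul_cancel₀ (ne_of_gt hdpos),
            Real.rpow_one]
        rw [hxeq]
        exact pow_le_pow_left₀ (Real.rpow_nonneg hx _) hle _
      -- split off the i = m term of q
      have hsplit : Finset.Icc m n = insert m (Finset.Icc (m+1) n) := by
        rw [Finset.Icc_add_one_left_eq_Ioc, Finset.Ioc_insert_left hm₂]
      have hnotmem : m ∉ Finset.Icc (m+1) n := by simp
      rw [qPoly, hsplit, Finset.sum_insert hnotmem] at hq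
      have hdiv : esym σ (n - m) / esym σ (n - m) = 1 := div_self hsnm.ne'
      rw [hdiv] at hq
      have hq' : (-1 : ℂ) ^ (n - m) * ν ^ m =
          -∑ i ∈ Finset.Icc (m+1) n,
            (-1 : ℂ) ^ (n - i) * ((esym σ (n - i) / esym σ (n - m) : ℝ) : ℂ) * ν ^ i := by
        push_cast at hq ⊢
        linear_combination hq
      have habs : ‖ν‖ ^ m =
          ‖∑ i ∈ Finset.Icc (m+1) n,
            (-1 : ℂ) ^ (n - i) * ((esym σ (n - i) / esym σ (n - m) : ℝ) : ℂ) * ν ^ i‖ := by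
        have := congrArg norm hq'
        rwa [norm_neg, norm_mul, norm_pow, norm_pow, norm_neg, norm_one,
          one_pow, one_mul] at this
      -- bound the RHS
      have hnu : 0 < ‖ν‖ := by
        simpa [norm_pos_iff] using hν
      have ht : g * ‖ν‖ < 1/2 := by
        calc g * ‖ν‖ < g * (1 / (2 * g)) := mul_lt_mul_of_pos_left hlt hg
          _ = 1/2 := by field_simp
      have hsum : ‖∑ i ∈ Finset.Icc (m+1) n,
            (-1 : ℂ) ^ (n - i) * ((esym σ (n - i) / esym σ (n - m) : ℝ) : ℂ) * ν ^ i‖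
          ≤ ∑ i ∈ Finset.Icc (m+1) n, (1/2:ℝ)^(i - m) * ‖ν‖ ^ m := by
        refine le_trans (norm_sum_le _ _) (Finset.sum_le_sum ?_)
        intro i hi
        rw [norm_mul, norm_mul, norm_pow, norm_neg, norm_one, one_pow, one_mul,
          norm_pow, Complex.norm_real, Real.norm_eq_abs]
        have hci : 0 ≤ esym σ (n - i) / esym σ (n - m) :=
          div_nonneg (esym_nonneg σ hσnonneg _) hsnm.le
        rw [abs_of_nonneg hci]
        have hmi : m ≤ i := by rw [Finset.mem_Icc] at hi; omega
        have hνsplit : ‖ν‖ ^ i = ‖ν‖ ^ (i - m) * ‖ν‖ ^ m := by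
          rw [← pow_add]; congr 1; omega
        rw [hνsplit]
        have h1 : esym σ (n - i) / esym σ (n - m) * (‖ν‖ ^ (i - m) *
            ‖ν‖ ^ m) ≤ (g * ‖ν‖) ^ (i - m) * ‖ν‖ ^ m := by
          rw [mul_pow, ← mul_assoc]
          apply mul_le_mul_of_nonneg_right _ (by positivity)
          calc esym σ (n - i) / esym σ (n - m) * ‖ν‖ ^ (i - m)
              ≤ g ^ (i - m) * ‖ν‖ ^ (i - m) :=
                mul_le_mul_of_nonneg_right (hcoef i hi) (by positivity)
            _ = _ := rfl
        refine h1.trans ?_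
        apply mul_le_mul_of_nonneg_right _ (by positivity)
        exact pow_le_pow_left₀ (by positivity) ht.le _
      have hgeom : ∑ i ∈ Finset.Icc (m+1) n, (1/2:ℝ)^(i - m) * ‖ν‖ ^ m
          = (1 - (1/2:ℝ)^(n - m)) * ‖ν‖ ^ m := by
        rw [← Finset.sum_mul, geom_half_sum m n hm₂]
      have hfinal : ‖ν‖ ^ m ≤ (1 - (1/2:ℝ)^(n - m)) * ‖ν‖ ^ m :=
        habs.le.trans (hsum.trans hgeom.le)
      have hpos : (0:ℝ) < (1/2:ℝ)^(n - m) * ‖ν‖ ^ m := by positivity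
      nlinarith [hfinal, hpos]
  refine ⟨key, ?_⟩
  intro ν hν hq
  by_contra h0
  have h1 := key ν h0 hq
  rw [Metric.mem_ball, dist_zero_right] at hν
  linarith
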